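/- arXiv:1411.2451 — 2 statements merged into one kernel-verified Lean document; each statement's English description precedes it below -/
import Mathlib

section
/- Let D ≥ 2, k ≥ 1, and ε > 0. Then there exists δ > 0 depending on ε, k, D such that the following holds: if y_1,...,y_k and z_1,...,z_k are two k-point configurations in ℝ^D satisfying (1+δ)^{-1} ≤ |z_i − z_j|/|y_i − y_j| ≤ 1+δ for all i ≠ j, then there exists a Euclidean motion Φ_0 : x ↦ Tx + x_0 such that |z_i − Φ_0(y_i)| ≤ ε · diam{y_1,...,y_k} for each i = 1,...,k. If k ≤ D, then Φ_0 can be taken to be a proper Euclidean motion. -/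
open Metric Set Module Submodule

noncomputable section

variable {D k : ℕ}

local notation "Euc" => EuclideanSpace ℝ (Fin D)

lemma iso_matrix (L : EuclideanSpace ℝ (Fin D) ≃ₗᵢ[ℝ] EuclideanSpace ℝ (Fin D)) :
    ∃ T : Matrix (Fin D) (Fin D) ℝ, T ∈ Matrix.orthogonalGroup (Fin D) ℝ ∧
      Matrix.toEuclideanLin T = (L.toLinearEquiv : Euc →ₗ[ℝ] Euc) ∧
      T.det = LinearMap.det (L.toLinearEquiv : Euc →ₗ[ℝ] Euc) := by
  classical
  set b := EuclideanSpace.basisFun (Fin D) ℝ with hb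
  refine ⟨LinearMap.toMatrix b.toBasis b.toBasis (L.toLinearEquiv : Euc →ₗ[ℝ] Euc), ?_, ?_, ?_⟩
  · have h : LinearMap.toMatrix b.toBasis b.toBasis (L.toLinearEquiv : Euc →ₗ[ℝ] Euc)
        = b.toBasis.toMatrix (b.map L).toBasis := by
      ext i j
      rw [LinearMap.toMatrix_apply, Basis.toMatrix_apply, OrthonormalBasis.coe_toBasis,
        OrthonormalBasis.coe_toBasis, OrthonormalBasis.map_apply]
      rfl
    rw [h]
    exact b.toMatrix_orthonormalBasis_mem_orthogonal (b.map L)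
  · rw [Matrix.toEuclideanLin_eq_toLin_orthonormal]
    exact Matrix.toLin_toMatrix b.toBasis b.toBasis _
  · exact LinearMap.det_toMatrix _ _

lemma det_iso (L : EuclideanSpace ℝ (Fin D) ≃ₗᵢ[ℝ] EuclideanSpace ℝ (Fin D)) :
    LinearMap.det (L.toLinearEquiv : Euc →ₗ[ℝ] Euc) = 1 ∨
      LinearMap.det (L.toLinearEquiv : Euc →ₗ[ℝ] Euc) = -1 := by
  obtain ⟨T, hT, -, hdet⟩ := iso_matrix L
  rw [← hdet]
  rw [Matrix.mem_orthogonalGroup_iff'] at hT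
  have h2 := congrArg Matrix.det hT
  rw [Matrix.det_mul, Matrix.det_one,
    Matrix.det_transpose] at h2
  rw [← mul_self_eq_one_iff]
  exact h2

lemma gram_iso (u v : Fin k → EuclideanSpace ℝ (Fin D))
    (h : ∀ i j, inner ℝ (u i) (u j) = inner ℝ (v i) (v j)) :
    ∃ L : EuclideanSpace ℝ (Fin D) ≃ₗᵢ[ℝ] EuclideanSpace ℝ (Fin D),
      (∀ i, L (u i) = v i) ∧
      (span ℝ (Set.range u) ≠ ⊤ → LinearMap.det (L.toLinearEquiv : Euc →ₗ[ℝ] Euc) = 1) := by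
  classical
  set U := Fintype.linearCombination ℝ u with hU
  set V := Fintype.linearCombination ℝ v with hV
  have hUV : ∀ c c' : Fin k → ℝ, inner ℝ (U c) (U c') = inner ℝ (V c) (V c') := by
    intro c c'
    simp only [hU, hV, Fintype.linearCombination_apply, sum_inner, inner_sum,
      real_inner_smul_left, real_inner_smul_right, h]
  have hnorm : ∀ c, ‖U c‖ = ‖V c‖ := by
    intro c
    have := hUV c c
    rw [real_inner_self_eq_norm_mul_norm, real_inner_self_eq_norm_mul_norm] at this
    nlinarith [norm_nonneg (U c), norm_nonneg (V c)]
  have hker : LinearMap.ker U = LinearMap.ker V := by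
    ext c
    simp only [LinearMap.mem_ker]
    rw [← norm_eq_zero, hnorm c, norm_eq_zero]
  let e : LinearMap.range U ≃ₗ[ℝ] LinearMap.range V :=
    (U.quotKerEquivRange.symm.trans (Submodule.quotEquivOfEq _ _ hker)).trans V.quotKerEquivRange
  have he : ∀ c : Fin k → ℝ, (e ⟨U c, LinearMap.mem_range_self U c⟩ : Euc) = V c := by
    intro c
    have h1 : U.quotKerEquivRange (Submodule.Quotient.mk c) = ⟨U c, LinearMap.mem_range_self U c⟩ :=
      Subtype.ext (U.quotKerEquivRange_apply_mk c)
    simp only [e, LinearEquiv.trans_apply, ← h1, LinearEquiv.symm_apply_apply,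
      Submodule.quotEquivOfEq_mk, LinearMap.quotKerEquivRange_apply_mk]
  let li : LinearMap.range U →ₗᵢ[ℝ] Euc :=
    { toLinearMap := (LinearMap.range V).subtype ∘ₗ (e : LinearMap.range U →ₗ[ℝ] LinearMap.range V)
      norm_map' := by
        rintro ⟨x, hx⟩
        obtain ⟨c, rfl⟩ := hx
        simp only [LinearMap.coe_comp, Function.comp_apply, Submodule.coe_subtype,
          LinearEquiv.coe_coe]
        rw [show (⟨U c, _⟩ : LinearMap.range U) = ⟨U c, LinearMap.mem_range_self U c⟩ from rfl]
        rw [he c]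
        exact (hnorm c).symm ▸ rfl }
  have hli : ∀ c : Fin k → ℝ, li ⟨U c, LinearMap.mem_range_self U c⟩ = V c := by
    intro c
    simp only [li, LinearIsometry.coe_mk, LinearMap.coe_comp, Function.comp_apply,
      Submodule.coe_subtype, LinearEquiv.coe_coe, he c]
  let Lh : Euc →ₗᵢ[ℝ] Euc := li.extend
  let L0 : Euc ≃ₗᵢ[ℝ] Euc := Lh.toLinearIsometryEquiv rfl
  have hL0 : ∀ i, L0 (u i) = v i := by
    intro i
    have hui : U (Pi.single i 1) = u i := by
      simp [hU]
    have hvi : V (Pi.single i 1) = v i := by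
      simp [hV]
    have : L0 (u i) = Lh (u i) := Lh.toLinearIsometryEquiv_apply rfl (u i)
    rw [this]
    have := li.extend_apply ⟨U (Pi.single i 1), LinearMap.mem_range_self U _⟩
    rw [hli] at this
    rw [← hui, ← hvi]
    exact this
  by_cases hspan : span ℝ (Set.range u) = ⊤
  · exact ⟨L0, hL0, fun hne => absurd hspan hne⟩
  have hrU : LinearMap.range U = span ℝ (Set.range u) := Fintype.range_linearCombination ℝ u
  have hrV : LinearMap.range V = span ℝ (Set.range v) := Fintype.range_linearCombination ℝ v
  have hfr : finrank ℝ (span ℝ (Set.range v)) = finrank ℝ (span ℝ (Set.range u)) := by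
    rw [← hrU, ← hrV]
    exact (e.symm.finrank_eq)
  have hspanv : span ℝ (Set.range v) ≠ ⊤ := by
    intro htop
    apply hspan
    have h1 : finrank ℝ (span ℝ (Set.range u)) = finrank ℝ Euc := by
      rw [← hfr, htop, finrank_top]
    exact Submodule.eq_top_of_finrank_eq h1
  have hbot : (span ℝ (Set.range v))ᗮ ≠ ⊥ := by
    rw [Ne, Submodule.orthogonal_eq_bot_iff]
    exact hspanv
  obtain ⟨w, hw, hw0⟩ := (Submodule.ne_bot_iff _).mp hbot
  set K : Submodule ℝ Euc := (ℝ ∙ w)ᗮ with hK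
  have hrefl_det : LinearMap.det ((reflection K).toLinearEquiv : Euc →ₗ[ℝ] Euc) = -1 := by
    have h1 : Kᗮ = ℝ ∙ w := by
      rw [hK, Submodule.orthogonal_orthogonal]
    rw [det_reflection, h1, finrank_span_singleton hw0, pow_one]
  have hfix : ∀ i, reflection K (v i) = v i := by
    intro i
    apply reflection_mem_subspace_eq_self
    rw [hK, Submodule.mem_orthogonal_singleton_iff_inner_right]
    exact Submodule.inner_left_of_mem_orthogonal
      (Submodule.subset_span (Set.mem_range_self i)) hw
  rcases det_iso L0 with hdet | hdet
  · exact ⟨L0, hL0, fun _ => hdet⟩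
  · refine ⟨L0.trans (reflection K), fun i => ?_, fun _ => ?_⟩
    · rw [LinearIsometryEquiv.trans_apply, hL0 i, hfix i]
    · have hcomp : ((L0.trans (reflection K)).toLinearEquiv : Euc →ₗ[ℝ] Euc)
          = ((reflection K).toLinearEquiv : Euc →ₗ[ℝ] Euc) ∘ₗ
            (L0.toLinearEquiv : Euc →ₗ[ℝ] Euc) := rfl
      rw [hcomp, LinearMap.det_comp, hrefl_det, hdet]
      norm_num

lemma rigid (hk : 0 < k) (f g : Fin k → EuclideanSpace ℝ (Fin D))
    (hdist : ∀ i j, dist (g i) (g j) = dist (f i) (f j)) :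
    ∃ (L : EuclideanSpace ℝ (Fin D) ≃ₗᵢ[ℝ] EuclideanSpace ℝ (Fin D))
      (x₀ : EuclideanSpace ℝ (Fin D)),
      (∀ i, g i = L (f i) + x₀) ∧
      (k ≤ D → LinearMap.det (L.toLinearEquiv : Euc →ₗ[ℝ] Euc) = 1) := by
  classical
  set i0 : Fin k := ⟨0, hk⟩ with hi0
  set u : Fin k → EuclideanSpace ℝ (Fin D) := fun i => f i - f i0 with hu
  set v : Fin k → EuclideanSpace ℝ (Fin D) := fun i => g i - g i0 with hv
  have hn : ∀ i, ‖u i‖ = ‖v i‖ := by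
    intro i
    rw [hu, hv]
    simp only [← dist_eq_norm]
    exact (hdist i i0).symm
  have hsub : ∀ i j, ‖u i - u j‖ = ‖v i - v j‖ := by
    intro i j
    rw [hu, hv]
    simp only [sub_sub_sub_cancel_right, ← dist_eq_norm]
    exact (hdist i j).symm
  have hgram : ∀ i j, inner ℝ (u i) (u j) = inner ℝ (v i) (v j) := by
    intro i j
    rw [real_inner_eq_norm_mul_self_add_norm_mul_self_sub_norm_sub_mul_self_div_two,
      real_inner_eq_norm_mul_self_add_norm_mul_self_sub_norm_sub_mul_self_div_two,
      hn i, hn j, hsub i j]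
  obtain ⟨L, hL, hdet⟩ := gram_iso u v hgram
  refine ⟨L, g i0 - L (f i0), fun i => ?_, fun hkD => ?_⟩
  · have h2 : L (f i) - L (f i0) = g i - g i0 := by
      rw [← map_sub]; exact hL i
    calc g i = (g i - g i0) + g i0 := by abel
    _ = (L (f i) - L (f i0)) + g i0 := by rw [h2]
    _ = L (f i) + (g i0 - L (f i0)) := by abel
  · apply hdet
    have h0 : u i0 = 0 := sub_self _
    have hins : Set.range u = insert 0 (u '' ({i0}ᶜ : Set (Fin k))) := by
      ext x
      constructor
      · rintro ⟨i, rfl⟩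
        by_cases hi : i = i0
        · subst hi; exact Set.mem_insert_iff.mpr (Or.inl h0)
        · exact Set.mem_insert_iff.mpr (Or.inr ⟨i, hi, rfl⟩)
      · intro hx
        rcases Set.mem_insert_iff.mp hx with h | ⟨i, -, rfl⟩
        · exact ⟨i0, h ▸ h0⟩
        · exact ⟨i, rfl⟩
    have himg : u '' ({i0}ᶜ : Set (Fin k))
        = ↑(Finset.image u (Finset.univ.erase i0)) := by
      rw [Finset.coe_image, Finset.coe_erase, Finset.coe_univ]
      congr 1
      ext i
      simp
    have hlt : finrank ℝ (span ℝ (Set.range u)) < D := by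
      rw [hins, span_insert_zero, himg]
      have h1 := finrank_span_finset_le_card (R := ℝ) (Finset.image u (Finset.univ.erase i0))
      have h2 : (Finset.image u (Finset.univ.erase i0)).card ≤ k - 1 := by
        refine le_trans (Finset.card_image_le) ?_
        simp [Finset.card_erase_of_mem]
      have h3 : (1 : ℕ) ≤ k := hk
      calc finrank ℝ (span ℝ (↑(Finset.image u (Finset.univ.erase i0))
            : Set (EuclideanSpace ℝ (Fin D)))) ≤ _ := h1
      _ < D := by omega
    intro htop
    rw [htop, finrank_top, finrank_euclideanSpace_fin] at hlt
    omega

lemma diam_range_le_of_dist_le {ι : Type*} [Fintype ι] {D : ℕ}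
    (f g : ι → EuclideanSpace ℝ (Fin D)) {c : ℝ} (hc : 0 ≤ c)
    (h : ∀ i j, dist (f i) (f j) ≤ c * dist (g i) (g j)) :
    Metric.diam (Set.range f) ≤ c * Metric.diam (Set.range g) := by
  apply Metric.diam_le_of_forall_dist_le (mul_nonneg hc Metric.diam_nonneg)
  rintro x ⟨i, rfl⟩ y ⟨j, rfl⟩
  exact (h i j).trans (mul_le_mul_of_nonneg_left
    (Metric.dist_le_diam_of_mem ((Set.finite_range g).isBounded) ⟨i, rfl⟩ ⟨j, rfl⟩) hc)

/-- For every `ε > 0` there is `δ > 0` such that any two k-point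
configurations whose pairwise distance ratios lie in `[(1+δ)⁻¹, 1+δ]` can be aligned
to within `ε · diam{y_1,...,y_k}` by a Euclidean motion; proper if `k ≤ D`. -/
theorem approximate_alignment
    (D k : ℕ) (hD : 2 ≤ D) (hk : 1 ≤ k) (ε : ℝ) (hε : 0 < ε) :
    ∃ δ > 0, ∀ y z : Fin k → EuclideanSpace ℝ (Fin D),
      Function.Injective y → Function.Injective z →
      (∀ i j, i ≠ j →
        (1 + δ)⁻¹ ≤ dist (z i) (z j) / dist (y i) (y j) ∧
        dist (z i) (z j) / dist (y i) (y j) ≤ 1 + δ) →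
      ∃ (T : Matrix (Fin D) (Fin D) ℝ) (x₀ : EuclideanSpace ℝ (Fin D)),
        T ∈ Matrix.orthogonalGroup (Fin D) ℝ ∧
        (∀ i, dist (z i) (Matrix.toEuclideanLin T (y i) + x₀)
            ≤ ε * Metric.diam (Set.range y)) ∧
        (k ≤ D → T.det = 1) := by
  classical
  rcases eq_or_lt_of_le hk with hk1 | hk2
  · -- k = 1 : exact alignment by translation
    obtain rfl : k = 1 := hk1.symm
    refine ⟨1, one_pos, fun y z _ _ _ => ?_⟩
    refine ⟨1, z 0 - Matrix.toEuclideanLin (1 : Matrix (Fin D) (Fin D) ℝ) (y 0),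
      one_mem _, fun i => ?_, fun _ => Matrix.det_one⟩
    have hi : i = 0 := Subsingleton.elim i 0
    subst hi
    rw [add_sub_cancel, dist_self]
    exact mul_nonneg hε.le Metric.diam_nonneg
  · by_contra hcon
    push_neg at hcon
    set i0 : Fin k := ⟨0, by omega⟩ with hi0def
    set i1 : Fin k := ⟨1, hk2⟩ with hi1def
    have h01 : i0 ≠ i1 := by simp [hi0def, hi1def, Fin.ext_iff]
    choose Y Z hYinj hZinj hrat hbad using
      fun n : ℕ => hcon (1 / ((n : ℝ) + 1)) (by positivity)
    have hdY : ∀ n, 0 < Metric.diam (Set.range (Y n)) := by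
      intro n
      have h1 : 0 < dist (Y n i0) (Y n i1) :=
        dist_pos.mpr (fun h => h01 (hYinj n h))
      exact lt_of_lt_of_le h1 (Metric.dist_le_diam_of_mem
        ((Set.finite_range _).isBounded) ⟨i0, rfl⟩ ⟨i1, rfl⟩)
    set c : ℕ → ℝ := fun n => (Metric.diam (Set.range (Y n)))⁻¹ with hcdef
    have hc : ∀ n, 0 < c n := fun n => inv_pos.mpr (hdY n)
    set y' : ℕ → Fin k → EuclideanSpace ℝ (Fin D) :=
      fun n i => c n • (Y n i - Y n i0) with hy'def
    set z' : ℕ → Fin k → EuclideanSpace ℝ (Fin D) :=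
      fun n i => c n • (Z n i - Z n i0) with hz'def
    have hdy' : ∀ n i j, dist (y' n i) (y' n j) = c n * dist (Y n i) (Y n j) := by
      intro n i j
      rw [hy'def]
      simp only [dist_smul₀, dist_sub_right, Real.norm_eq_abs, abs_of_pos (hc n)]
    have hdz' : ∀ n i j, dist (z' n i) (z' n j) = c n * dist (Z n i) (Z n j) := by
      intro n i j
      rw [hz'def]
      simp only [dist_smul₀, dist_sub_right, Real.norm_eq_abs, abs_of_pos (hc n)]
    have hδpos : ∀ n : ℕ, (0:ℝ) < 1 + 1 / ((n:ℝ) + 1) := by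
      intro n; positivity
    have hz'ub : ∀ n i j, dist (z' n i) (z' n j)
        ≤ (1 + 1 / ((n:ℝ) + 1)) * dist (y' n i) (y' n j) := by
      intro n i j
      by_cases hij : i = j
      · subst hij; simp [dist_self]
      · have hY0 : 0 < dist (Y n i) (Y n j) := dist_pos.mpr (fun h => hij (hYinj n h))
        have h2 := (hrat n i j hij).2
        rw [div_le_iff₀ hY0] at h2
        rw [hdz' n i j, hdy' n i j]
        calc c n * dist (Z n i) (Z n j)
            ≤ c n * ((1 + 1 / ((n:ℝ) + 1)) * dist (Y n i) (Y n j)) :=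
              mul_le_mul_of_nonneg_left h2 (hc n).le
        _ = (1 + 1 / ((n:ℝ) + 1)) * (c n * dist (Y n i) (Y n j)) := by ring
    have hy'ub : ∀ n i j, dist (y' n i) (y' n j)
        ≤ (1 + 1 / ((n:ℝ) + 1)) * dist (z' n i) (z' n j) := by
      intro n i j
      by_cases hij : i = j
      · subst hij; simp [dist_self]
      · have hY0 : 0 < dist (Y n i) (Y n j) := dist_pos.mpr (fun h => hij (hYinj n h))
        have h2 := (hrat n i j hij).1
        rw [le_div_iff₀ hY0] at h2
        have h3 : dist (Y n i) (Y n j)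
            ≤ (1 + 1 / ((n:ℝ) + 1)) * dist (Z n i) (Z n j) := by
          have h4 := mul_le_mul_of_nonneg_left h2 (hδpos n).le
          rw [← mul_assoc, mul_inv_cancel₀ (hδpos n).ne', one_mul] at h4
          exact h4
        rw [hdz' n i j, hdy' n i j]
        calc c n * dist (Y n i) (Y n j)
            ≤ c n * ((1 + 1 / ((n:ℝ) + 1)) * dist (Z n i) (Z n j)) :=
              mul_le_mul_of_nonneg_left h3 (hc n).le
        _ = (1 + 1 / ((n:ℝ) + 1)) * (c n * dist (Z n i) (Z n j)) := by ring
    have hdiam1 : ∀ n, Metric.diam (Set.range (y' n)) = 1 := by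
      intro n
      have e1 : c n * Metric.diam (Set.range (Y n)) = 1 :=
        inv_mul_cancel₀ (hdY n).ne'
      have le1 : Metric.diam (Set.range (y' n)) ≤ c n * Metric.diam (Set.range (Y n)) :=
        diam_range_le_of_dist_le _ _ (hc n).le (fun i j => le_of_eq (hdy' n i j))
      have le2 : Metric.diam (Set.range (Y n)) ≤ (c n)⁻¹ * Metric.diam (Set.range (y' n)) :=
        diam_range_le_of_dist_le _ _ (inv_pos.mpr (hc n)).le (fun i j => by
          rw [hdy' n i j, inv_mul_cancel_left₀ (hc n).ne'])
      have e2 : c n * Metric.diam (Set.range (Y n)) ≤ Metric.diam (Set.range (y' n)) := by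
        calc c n * Metric.diam (Set.range (Y n))
            ≤ c n * ((c n)⁻¹ * Metric.diam (Set.range (y' n))) :=
              mul_le_mul_of_nonneg_left le2 (hc n).le
        _ = Metric.diam (Set.range (y' n)) := by
          rw [mul_inv_cancel_left₀ (hc n).ne']
      linarith
    have hy'0 : ∀ n, y' n i0 = 0 := by
      intro n; rw [hy'def]; simp
    have hz'0 : ∀ n, z' n i0 = 0 := by
      intro n; rw [hz'def]; simp
    have hdy'le1 : ∀ n i, dist (y' n i) (y' n i0) ≤ 1 := by
      intro n i
      have := Metric.dist_le_diam_of_mem ((Set.finite_range (y' n)).isBounded)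
        (⟨i, rfl⟩ : y' n i ∈ Set.range (y' n)) ⟨i0, rfl⟩
      rwa [hdiam1 n] at this
    have hy'norm : ∀ n i, ‖y' n i‖ ≤ 1 := by
      intro n i
      have := hdy'le1 n i
      rwa [hy'0 n, dist_zero_right] at this
    have hz'norm : ∀ n i, ‖z' n i‖ ≤ 2 := by
      intro n i
      have h1 := hz'ub n i i0
      rw [hz'0 n, dist_zero_right] at h1
      have h3 : (1:ℝ) + 1 / ((n:ℝ) + 1) ≤ 2 := by
        have : (1:ℝ) / ((n:ℝ) + 1) ≤ 1 := by
          rw [div_le_one (by positivity)]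
          linarith [Nat.cast_nonneg (α := ℝ) n]
        linarith
      calc ‖z' n i‖ ≤ (1 + 1 / ((n:ℝ) + 1)) * dist (y' n i) (y' n i0) := h1
      _ ≤ 2 * 1 := mul_le_mul h3 (hdy'le1 n i) dist_nonneg (by norm_num)
      _ = 2 := by norm_num
    set p : ℕ → (Fin k → EuclideanSpace ℝ (Fin D)) × (Fin k → EuclideanSpace ℝ (Fin D)) :=
      fun n => (y' n, z' n) with hpdef
    have hpmem : ∀ n, p n ∈ Metric.closedBall
        (0 : (Fin k → EuclideanSpace ℝ (Fin D)) × (Fin k → EuclideanSpace ℝ (Fin D))) 2 := by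
      intro n
      rw [Metric.mem_closedBall, dist_zero_right, Prod.norm_def]
      apply max_le
      · exact (pi_norm_le_iff_of_nonneg (by norm_num)).mpr
          (fun i => (hy'norm n i).trans (by norm_num))
      · exact (pi_norm_le_iff_of_nonneg (by norm_num)).mpr (hz'norm n)
    obtain ⟨a, -, φ, hφ, hconv⟩ :=
      tendsto_subseq_of_bounded Metric.isBounded_closedBall hpmem
    have hyc : ∀ i, Filter.Tendsto (fun m => y' (φ m) i) Filter.atTop (nhds (a.1 i)) := by
      intro i
      have h1 : Filter.Tendsto (fun m => (p (φ m)).1) Filter.atTop (nhds a.1) :=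
        ((continuous_fst.tendsto a).comp hconv)
      exact ((continuous_apply i).tendsto a.1).comp h1
    have hzc : ∀ i, Filter.Tendsto (fun m => z' (φ m) i) Filter.atTop (nhds (a.2 i)) := by
      intro i
      have h1 : Filter.Tendsto (fun m => (p (φ m)).2) Filter.atTop (nhds a.2) :=
        ((continuous_snd.tendsto a).comp hconv)
      exact ((continuous_apply i).tendsto a.2).comp h1
    have hδconv : Filter.Tendsto (fun m : ℕ => (1:ℝ) + 1 / ((φ m : ℝ) + 1))
        Filter.atTop (nhds 1) := by
      have h1 : Filter.Tendsto (fun m : ℕ => (1:ℝ) / ((m:ℝ) + 1))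
          Filter.atTop (nhds 0) := tendsto_one_div_add_atTop_nhds_zero_nat
      have h2 : Filter.Tendsto (fun m : ℕ => (1:ℝ) + 1 / ((φ m : ℝ) + 1))
          Filter.atTop (nhds (1 + 0)) :=
        Filter.Tendsto.const_add 1 (h1.comp hφ.tendsto_atTop)
      simpa using h2
    have hdistinf : ∀ i j, dist (a.2 i) (a.2 j) = dist (a.1 i) (a.1 j) := by
      intro i j
      have hzt : Filter.Tendsto (fun m => dist (z' (φ m) i) (z' (φ m) j))
          Filter.atTop (nhds (dist (a.2 i) (a.2 j))) := (hzc i).dist (hzc j)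
      have hyt : Filter.Tendsto (fun m => dist (y' (φ m) i) (y' (φ m) j))
          Filter.atTop (nhds (dist (a.1 i) (a.1 j))) := (hyc i).dist (hyc j)
      have hub : dist (a.2 i) (a.2 j) ≤ 1 * dist (a.1 i) (a.1 j) :=
        le_of_tendsto_of_tendsto' hzt (hδconv.mul hyt)
          (fun m => hz'ub (φ m) i j)
      have hlb : dist (a.1 i) (a.1 j) ≤ 1 * dist (a.2 i) (a.2 j) :=
        le_of_tendsto_of_tendsto' hyt (hδconv.mul hzt)
          (fun m => hy'ub (φ m) i j)
      rw [one_mul] at hub hlb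
      linarith
    obtain ⟨L, x₀', hLa, hLdet⟩ := rigid (by omega : 0 < k) a.1 a.2 hdistinf
    obtain ⟨T, hTorth, hTlin, hTdet⟩ := iso_matrix L
    rw [Metric.tendsto_atTop] at hconv
    obtain ⟨N, hN⟩ := hconv (ε / 2) (by positivity)
    set n := φ N with hndef
    have hdistpa : dist (p n) a ≤ ε / 2 := (hN N le_rfl).le
    have herr : ∀ i, dist (z' n i) (L (y' n i) + x₀') ≤ ε := by
      intro i
      have h1 : dist (z' n i) (a.2 i) ≤ ε / 2 := by
        calc dist (z' n i) (a.2 i) ≤ dist (p n).2 a.2 := dist_le_pi_dist _ _ i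
        _ ≤ dist (p n) a := by rw [Prod.dist_eq]; exact le_max_right _ _
        _ ≤ ε / 2 := hdistpa
      have h2 : dist (a.1 i) (y' n i) ≤ ε / 2 := by
        calc dist (a.1 i) (y' n i) = dist (y' n i) (a.1 i) := dist_comm _ _
        _ ≤ dist (p n).1 a.1 := dist_le_pi_dist _ _ i
        _ ≤ dist (p n) a := by rw [Prod.dist_eq]; exact le_max_left _ _
        _ ≤ ε / 2 := hdistpa
      calc dist (z' n i) (L (y' n i) + x₀')
          ≤ dist (z' n i) (a.2 i) + dist (a.2 i) (L (y' n i) + x₀') := dist_triangle _ _ _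
      _ = dist (z' n i) (a.2 i) + dist (L (a.1 i) + x₀') (L (y' n i) + x₀') := by
          rw [hLa i]
      _ = dist (z' n i) (a.2 i) + dist (L (a.1 i)) (L (y' n i)) := by
          rw [dist_add_right]
      _ = dist (z' n i) (a.2 i) + dist (a.1 i) (y' n i) := by
          rw [L.dist_map]
      _ ≤ ε / 2 + ε / 2 := add_le_add h1 h2
      _ = ε := by ring
    have hLT : ∀ x, Matrix.toEuclideanLin T x = L x := by
      intro x; rw [hTlin]; rfl
    have key : ∀ i, dist (Z n i)
        (Matrix.toEuclideanLin T (Y n i) + (Z n i0 - L (Y n i0) + (c n)⁻¹ • x₀'))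
        ≤ ε * Metric.diam (Set.range (Y n)) := by
      intro i
      rw [hLT]
      have hcne := (hc n).ne'
      have hid : Z n i - (L (Y n i) + (Z n i0 - L (Y n i0) + (c n)⁻¹ • x₀'))
          = (c n)⁻¹ • (z' n i - (L (y' n i) + x₀')) := by
        rw [hz'def, hy'def]
        simp only [smul_sub, smul_add, L.map_smul, inv_smul_smul₀ hcne, map_sub]
        abel
      rw [dist_eq_norm, hid, norm_smul, Real.norm_eq_abs,
        abs_of_pos (inv_pos.mpr (hc n)), ← dist_eq_norm]
      have hdiameq : Metric.diam (Set.range (Y n)) = (c n)⁻¹ := by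
        rw [hcdef, inv_inv]
      rw [hdiameq, mul_comm (ε) ((c n)⁻¹)]
      exact mul_le_mul_of_nonneg_left (herr i) (inv_pos.mpr (hc n)).le
    have hfinal := hbad n T (Z n i0 - L (Y n i0) + (c n)⁻¹ • x₀') hTorth key
    exact hfinal.2 (by rw [hTdet]; exact hLdet hfinal.1)
end
end

section
/- Let D ≥ 2, let k ≥ 2 be an integer, and let 0 < η ≤ 1/10. Let E ⊂ ℝ^D be a set consisting of k distinct points. Then E can be partitioned into nonempty sets E_1, E_2,...,E_{μmax} and there exists a positive integer l with 10 ≤ l ≤ 100 + k(k−1)/2 such that diam(E_μ) ≤ η^l · diam(E) for each μ, and dist(E_μ, E_{μ'}) ≥ η^{l−1} · diam(E) for all μ ≠ μ'. -/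
/-- Clustering lemma. A set of `k ≥ 2` distinct points in `ℝ^D` can be
partitioned into nonempty clusters `E_1,...,E_{μmax}`, with an integer
`10 ≤ l ≤ 100 + C(k,2)`, so that each cluster has diameter `≤ η^l diam E` and distinct
clusters are at distance `≥ η^{l-1} diam E`. -/
theorem clustering_partition
    (D k : ℕ) (hD : 2 ≤ D) (hk : 2 ≤ k) (η : ℝ) (hη₁ : 0 < η) (hη₂ : η ≤ 1 / 10)
    (E : Finset (EuclideanSpace ℝ (Fin D))) (hcard : E.card = k) :
    ∃ (μmax : ℕ) (Es : Fin μmax → Finset (EuclideanSpace ℝ (Fin D))) (l : ℕ),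
      10 ≤ l ∧ l ≤ 100 + Nat.choose k 2 ∧
      (∀ μ, (Es μ).Nonempty) ∧
      (∀ μ μ', μ ≠ μ' → Disjoint (Es μ) (Es μ')) ∧
      (∀ x, x ∈ E ↔ ∃ μ, x ∈ Es μ) ∧
      (∀ μ, Metric.diam (Es μ : Set (EuclideanSpace ℝ (Fin D)))
          ≤ η ^ l * Metric.diam (E : Set (EuclideanSpace ℝ (Fin D)))) ∧
      (∀ μ μ', μ ≠ μ' → ∀ x ∈ Es μ, ∀ x' ∈ Es μ',
        η ^ (l - 1) * Metric.diam (E : Set (EuclideanSpace ℝ (Fin D))) ≤ dist x x') := by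
  classical
  set d0 := Metric.diam (E : Set (EuclideanSpace ℝ (Fin D))) with hd0def
  have hbd : Bornology.IsBounded (E : Set (EuclideanSpace ℝ (Fin D))) := E.finite_toSet.isBounded
  obtain ⟨x₀, hx₀, y₀, hy₀, hxy₀⟩ : ∃ x ∈ E, ∃ y ∈ E, x ≠ y :=
    Finset.one_lt_card.mp (by omega)
  have hd0 : 0 < d0 :=
    lt_of_lt_of_le (dist_pos.mpr hxy₀) (Metric.dist_le_diam_of_mem hbd hx₀ hy₀)
  have hη1 : η < 1 := lt_of_le_of_lt hη₂ (by norm_num)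
  have hmono : ∀ lo hi : ℕ, lo ≤ hi → η ^ hi ≤ η ^ lo := fun lo hi h =>
    pow_le_pow_of_le_one (le_of_lt hη₁) (le_of_lt hη1) h
  -- choose a good scale l
  set W : ℕ → (EuclideanSpace ℝ (Fin D)) × (EuclideanSpace ℝ (Fin D)) → Prop :=
    fun l p => p.1 ∈ E ∧ p.2 ∈ E ∧ η ^ l * d0 < dist p.1 p.2 ∧ dist p.1 p.2 < η ^ (l-1) * d0
    with hWdef
  -- disjointness of windows
  have hwin : ∀ lo hi : ℕ, lo < hi → ∀ d : ℝ, η ^ lo * d0 < d → d < η ^ (hi-1) * d0 → False := by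
    intro lo hi hlt d h1 h2
    have : η ^ (hi-1) ≤ η ^ lo := hmono lo (hi-1) (by omega)
    have : η ^ (hi-1) * d0 ≤ η ^ lo * d0 := mul_le_mul_of_nonneg_right this (le_of_lt hd0)
    linarith
  set L : Finset ℕ := Finset.Icc 10 (100 + Nat.choose k 2) with hLdef
  set Bad : Finset ℕ := L.filter (fun l => ∃ p, W l p) with hBaddef
  have hBadcard : Bad.card ≤ Nat.choose k 2 := by
    rw [← hcard, ← Sym2.card_image_offDiag]
    refine Finset.card_le_card_of_injOn
      (fun l => if h : ∃ p, W l p then Sym2.mk h.choose.1 h.choose.2 else Sym2.mk x₀ x₀) ?_ ?_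
    · intro l hl
      rw [hBaddef, Finset.mem_coe, Finset.mem_filter] at hl
      obtain ⟨hlL, h⟩ := hl
      simp only [dif_pos h]
      obtain ⟨h1, h2, h3, h4⟩ := h.choose_spec
      apply Finset.mem_image_of_mem
      rw [Finset.mem_offDiag]
      refine ⟨h1, h2, fun hEq => ?_⟩
      rw [hEq] at h3
      have : (0:ℝ) < η ^ l * d0 := by positivity
      simp only [dist_self] at h3
      linarith
    · intro l hl l' hl' heq
      rw [hBaddef, Finset.mem_coe, Finset.mem_filter] at hl hl'
      obtain ⟨hlL, h⟩ := hl
      obtain ⟨hl'L, h'⟩ := hl'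
      simp only [dif_pos h, dif_pos h'] at heq
      obtain ⟨_, _, h3, h4⟩ := h.choose_spec
      obtain ⟨_, _, h3', h4'⟩ := h'.choose_spec
      have hdeq : dist h.choose.1 h.choose.2 = dist h'.choose.1 h'.choose.2 := by
        rcases (Sym2.mk_eq_mk_iff (p := h.choose) (q := h'.choose)).mp heq with e | e
        · rw [e]
        · rw [e]; exact dist_comm _ _
      rcases Nat.lt_trichotomy l l' with hlt | hEq | hlt
      · exact absurd (hwin l l' hlt _ (hdeq ▸ h3) (hdeq ▸ h4')) not_false
      · exact hEq
      · exact absurd (hwin l' l hlt _ (hdeq ▸ h3') (hdeq ▸ h4)) not_false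
  have hLcard : L.card = 91 + Nat.choose k 2 := by
    rw [hLdef, Nat.card_Icc]; omega
  obtain ⟨l, hlL, hlGood⟩ : ∃ l ∈ L, l ∉ Bad := by
    by_contra hcon
    push_neg at hcon
    have : L.card ≤ Bad.card := Finset.card_le_card hcon
    omega
  rw [hBaddef, Finset.mem_filter, not_and] at hlGood
  have hgood : ∀ x ∈ E, ∀ y ∈ E,
      ¬(η ^ l * d0 < dist x y ∧ dist x y < η ^ (l-1) * d0) := by
    intro x hx y hy hcon
    exact (hlGood hlL) ⟨(x, y), hx, hy, hcon.1, hcon.2⟩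
  rw [hLdef, Finset.mem_Icc] at hlL
  set t := η ^ l * d0 with htdef
  have ht0 : 0 ≤ t := by positivity
  have hkey : ∀ x ∈ E, ∀ y ∈ E, dist x y < η ^ (l-1) * d0 → dist x y ≤ t := by
    intro x hx y hy hlt
    by_contra hgt
    exact hgood x hx y hy ⟨lt_of_not_ge hgt, hlt⟩
  have hX : (0:ℝ) < η ^ (l-1) * d0 := by positivity
  have h2t : 2 * t < η ^ (l-1) * d0 := by
    have hls : η ^ l = η * η ^ (l-1) := by
      rw [← pow_succ']
      congr 1
      omega
    calc 2 * t = (2 * η) * (η ^ (l-1) * d0) := by rw [htdef, hls]; ring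
      _ ≤ (1/5) * (η ^ (l-1) * d0) :=
          mul_le_mul_of_nonneg_right (by linarith) (le_of_lt hX)
      _ < η ^ (l-1) * d0 := by linarith
  -- transitivity of the closeness relation on E
  have htrans : ∀ a ∈ E, ∀ c ∈ E, ∀ b, dist a b ≤ t → dist b c ≤ t → dist a c ≤ t := by
    intro a ha c hc b h1 h2
    apply hkey a ha c hc
    calc dist a c ≤ dist a b + dist b c := dist_triangle _ _ _
      _ ≤ 2 * t := by linarith
      _ < η ^ (l-1) * d0 := h2t
  -- the clusters
  set C : EuclideanSpace ℝ (Fin D) → Finset (EuclideanSpace ℝ (Fin D)) :=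
    fun x => E.filter (fun y => dist x y ≤ t) with hCdef
  have hCsub : ∀ x, C x ⊆ E := fun x => Finset.filter_subset _ _
  have hself : ∀ x ∈ E, x ∈ C x := by
    intro x hx
    rw [hCdef]
    simpa [Finset.mem_filter, hx] using ht0
  have hCeq : ∀ x ∈ E, ∀ x' ∈ E, dist x x' ≤ t → C x = C x' := by
    intro x hx x' hx' hxx'
    ext y
    simp only [hCdef, Finset.mem_filter, and_congr_right_iff]
    intro hy
    constructor
    · intro h
      exact htrans x' hx' y hy x (by rwa [dist_comm]) h
    · intro h
      exact htrans x hx y hy x' hxx' h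
  set CS : Finset (Finset (EuclideanSpace ℝ (Fin D))) := E.image C with hCSdef
  set e := CS.equivFin with hedef
  refine ⟨CS.card, fun μ => (e.symm μ : Finset (EuclideanSpace ℝ (Fin D))), l,
    hlL.1, hlL.2, ?_, ?_, ?_, ?_, ?_⟩
  · -- nonempty
    intro μ
    have hmem : ((e.symm μ : CS) : Finset (EuclideanSpace ℝ (Fin D))) ∈ CS := (e.symm μ).2
    obtain ⟨x, hx, hEq⟩ := Finset.mem_image.mp hmem
    refine ⟨x, show x ∈ ((e.symm μ : {s // s ∈ CS}) : Finset (EuclideanSpace ℝ (Fin D))) from ?_⟩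
    rw [← hEq]
    exact hself x hx
  · -- disjoint
    intro μ μ' hne
    have hmem := (e.symm μ).2
    have hmem' := (e.symm μ').2
    obtain ⟨x, hx, hEq⟩ := Finset.mem_image.mp hmem
    obtain ⟨x', hx', hEq'⟩ := Finset.mem_image.mp hmem'
    have hCne : ((e.symm μ : CS) : Finset (EuclideanSpace ℝ (Fin D)))
        ≠ ((e.symm μ' : CS) : Finset (EuclideanSpace ℝ (Fin D))) := by
      intro h
      exact hne (e.symm.injective (Subtype.ext h))
    rw [Finset.disjoint_left]
    intro y hy hy'
    apply hCne
    replace hy : y ∈ ((e.symm μ : {s // s ∈ CS}) : Finset (EuclideanSpace ℝ (Fin D))) := hy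
    replace hy' : y ∈ ((e.symm μ' : {s // s ∈ CS}) : Finset (EuclideanSpace ℝ (Fin D))) := hy'
    rw [← hEq] at hy ⊢
    rw [← hEq'] at hy' ⊢
    rw [hCdef] at hy hy'
    simp only [Finset.mem_filter] at hy hy'
    exact hCeq x hx x' hx'
      (htrans x hx x' hx' y hy.2 (by rw [dist_comm]; exact hy'.2))
  · -- cover
    intro y
    constructor
    · intro hy
      have : C y ∈ CS := Finset.mem_image_of_mem _ hy
      refine ⟨e ⟨C y, this⟩, show y ∈ ((e.symm (e ⟨C y, this⟩) : {s // s ∈ CS}) :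
        Finset (EuclideanSpace ℝ (Fin D))) from ?_⟩
      rw [Equiv.symm_apply_apply]
      exact hself y hy
    · rintro ⟨μ, hy⟩
      have hmem := (e.symm μ).2
      obtain ⟨x, hx, hEq⟩ := Finset.mem_image.mp hmem
      replace hy : y ∈ ((e.symm μ : {s // s ∈ CS}) : Finset (EuclideanSpace ℝ (Fin D))) := hy
      rw [← hEq] at hy
      exact hCsub x hy
  · -- diameter
    intro μ
    apply Metric.diam_le_of_forall_dist_le ht0
    intro y hy z hz
    rw [Finset.mem_coe] at hy hz
    have hmem := (e.symm μ).2
    obtain ⟨x, hx, hEq⟩ := Finset.mem_image.mp hmem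
    replace hy : y ∈ ((e.symm μ : {s // s ∈ CS}) : Finset (EuclideanSpace ℝ (Fin D))) := hy
    replace hz : z ∈ ((e.symm μ : {s // s ∈ CS}) : Finset (EuclideanSpace ℝ (Fin D))) := hz
    rw [← hEq, hCdef] at hy hz
    simp only [Finset.mem_filter] at hy hz
    exact htrans y hy.1 z hz.1 x (by rw [dist_comm]; exact hy.2) hz.2
  · -- separation
    intro μ μ' hne y hy y' hy'
    have hmem := (e.symm μ).2
    have hmem' := (e.symm μ').2
    obtain ⟨x, hx, hEq⟩ := Finset.mem_image.mp hmem
    obtain ⟨x', hx', hEq'⟩ := Finset.mem_image.mp hmem'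
    replace hy : y ∈ ((e.symm μ : {s // s ∈ CS}) : Finset (EuclideanSpace ℝ (Fin D))) := hy
    replace hy' : y' ∈ ((e.symm μ' : {s // s ∈ CS}) : Finset (EuclideanSpace ℝ (Fin D))) := hy'
    rw [← hEq, hCdef] at hy
    rw [← hEq', hCdef] at hy'
    simp only [Finset.mem_filter] at hy hy'
    have hCne : ((e.symm μ : CS) : Finset (EuclideanSpace ℝ (Fin D)))
        ≠ ((e.symm μ' : CS) : Finset (EuclideanSpace ℝ (Fin D))) := by
      intro h
      exact hne (e.symm.injective (Subtype.ext h))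
    have hfar : t < dist y y' := by
      by_contra hle
      push_neg at hle
      apply hCne
      rw [← hEq, ← hEq']
      apply hCeq x hx x' hx'
      have h1 : dist x y' ≤ t :=
        htrans x hx y' hy'.1 y hy.2 hle
      exact htrans x hx x' hx' y' h1 (by rw [dist_comm]; exact hy'.2)
    by_contra hcon
    push_neg at hcon
    exact hgood y hy.1 y' hy'.1 ⟨hfar, hcon⟩
end
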